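/- In any duplicial algebra (A, /, \), defining the magmatic bracket {x,y} := x\y - x/y, the following identity holds: {x,{y,z}} differs from {{x,y},z} in a way expressible via the duplicial products, namely {z₁,{z₂,...,{z_{m-1},z_m}...}} = z₁\{z₂,...,{z_{m-1},z_m}...} - z₁/z₂\{z₃,...,{z_{m-1},z_m}...} + ... + (-1)^{m-1} z₁/z₂/.../z_m for all z₁,...,z_m ∈ A (for m ≥ 2). -/
import Mathlib


variable {K V : Type*} [Field K] [AddCommGroup V] [Module K V]

/-- Left-normed product `z / z₂ / ⋯ / z_m`. -/
def slashAll (d : V →ₗ[K] V →ₗ[K] V) (z : V) (l : List V) : V :=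
  l.foldl (fun acc w => d acc w) z

/-- Nested bracket `{z, {w₁, {w₂, …}}}` where `{x,y} := x\y - x/y`. -/
def nestBr (d b : V →ₗ[K] V →ₗ[K] V) : V → List V → V
  | z, [] => z
  | z, w :: t => b z (nestBr d b w t) - d z (nestBr d b w t)

/-- Nested bracket of a (nonempty) list. -/
def nestList (d b : V →ₗ[K] V →ₗ[K] V) : List V → V
  | [] => 0
  | w :: t => nestBr d b w t

lemma d_nestBr (d b : V →ₗ[K] V →ₗ[K] V)
    (ax1 : ∀ x y z : V, d x (d y z) = d (d x y) z)
    (ax2 : ∀ x y z : V, d x (b y z) = b (d x y) z) :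
    ∀ (t : List V) (z w : V), d z (nestBr d b w t) = nestBr d b (d z w) t := by
  intro t
  induction t with
  | nil => intro z w; rfl
  | cons u s ih =>
    intro z w
    simp only [nestBr, map_sub, ax1, ax2]

/-- In any duplicial algebra `(A, /, \)`, with `{x,y} := x\y - x/y`:
`{z₁,{z₂,…,{z_{m-1},z_m}…}} = Σ_{j} (-1)^j (z₁/…/z_{j+1}) \ {z_{j+2},…,z_m}
+ (-1)^{m-1} z₁/z₂/…/z_m`. -/
theorem duplicial_nested_bracket (d b : V →ₗ[K] V →ₗ[K] V)
    (ax1 : ∀ x y z : V, d x (d y z) = d (d x y) z)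
    (ax2 : ∀ x y z : V, d x (b y z) = b (d x y) z)
    (ax3 : ∀ x y z : V, b x (b y z) = b (b x y) z) :
    ∀ (z : V) (l : List V), l ≠ [] →
      nestBr d b z l =
        (∑ j ∈ Finset.range l.length,
          ((-1 : ℤ) ^ j) • b (slashAll d z (l.take j)) (nestList d b (l.drop j))) +
        ((-1 : ℤ) ^ l.length) • slashAll d z l := by
  intro z l
  induction l generalizing z with
  | nil => intro h; exact absurd rfl h
  | cons w t ih =>
    intro _
    rcases eq_or_ne t [] with rfl | ht
    · simp [nestBr, nestList, slashAll, Finset.sum_range_succ, sub_eq_add_neg]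
    · have hlen : (w :: t).length = t.length + 1 := rfl
      rw [hlen, Finset.sum_range_succ']
      have hshift : ∀ j : ℕ,
          ((-1 : ℤ) ^ (j + 1)) • b (slashAll d z ((w :: t).take (j + 1)))
              (nestList d b ((w :: t).drop (j + 1)))
            = -(((-1 : ℤ) ^ j) • b (slashAll d (d z w) (t.take j))
              (nestList d b (t.drop j))) := by
        intro j
        have h1 : slashAll d z ((w :: t).take (j + 1)) = slashAll d (d z w) (t.take j) := rfl
        have h2 : (w :: t).drop (j + 1) = t.drop j := rfl
        rw [h1, h2, pow_succ, mul_comm, neg_one_mul, neg_smul]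
      simp only [hshift]
      have h0 : ((-1 : ℤ) ^ 0) • b (slashAll d z ((w :: t).take 0))
          (nestList d b ((w :: t).drop 0)) = b z (nestBr d b w t) := by
        simp [slashAll, nestList]
      rw [h0]
      have hlast : ((-1 : ℤ) ^ (t.length + 1)) • slashAll d z (w :: t)
          = -(((-1 : ℤ) ^ t.length) • slashAll d (d z w) t) := by
        have : slashAll d z (w :: t) = slashAll d (d z w) t := rfl
        rw [this, pow_succ, mul_comm, neg_one_mul, neg_smul]
      rw [hlast, Finset.sum_neg_distrib]
      have := ih (d z w) ht
      show nestBr d b z (w :: t) = _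
      rw [show nestBr d b z (w :: t) = b z (nestBr d b w t) - d z (nestBr d b w t) from rfl,
        d_nestBr d b ax1 ax2, this]
      abel
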